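/- arXiv:2502.19084 — 2 statements merged into one kernel-verified Lean document; each statement's English description precedes it below -/
import Mathlib

section
/- Let F be a finite field and G a subgroup of GL_2(F). If G contains a subgroup of order #F and G acts irreducibly on F^2, then G contains SL_2(F). -/
open Matrix

section Aux
variable {F : Type*} [Field F]

/-- Upper elementary transvection as a unit. -/
def Um (t : F) : GL (Fin 2) F :=
  ⟨!![1, t; 0, 1], !![1, -t; 0, 1],
   by ext i j; fin_cases i <;> fin_cases j <;> simp [Matrix.mul_apply, Fin.sum_univ_two],
   by ext i j; fin_cases i <;> fin_cases j <;> simp [Matrix.mul_apply, Fin.sum_univ_two]⟩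

/-- Lower elementary transvection as a unit. -/
def Lm (t : F) : GL (Fin 2) F :=
  ⟨!![1, 0; t, 1], !![1, 0; -t, 1],
   by ext i j; fin_cases i <;> fin_cases j <;> simp [Matrix.mul_apply, Fin.sum_univ_two],
   by ext i j; fin_cases i <;> fin_cases j <;> simp [Matrix.mul_apply, Fin.sum_univ_two]⟩

lemma GLaux.mulVec_ne_zero (g : GL (Fin 2) F) {u : Fin 2 → F} (hu : u ≠ 0) :
    (g : Matrix (Fin 2) (Fin 2) F).mulVec u ≠ 0 := by
  intro h0
  apply hu
  have h1 : ((g⁻¹ * g : GL (Fin 2) F) : Matrix (Fin 2) (Fin 2) F).mulVec u = 0 := by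
    rw [Units.val_mul, ← Matrix.mulVec_mulVec, h0, Matrix.mulVec_zero]
  simpa using h1

lemma GLaux.inv_mulVec_eq {g : GL (Fin 2) F} {x y : Fin 2 → F}
    (h : (g : Matrix (Fin 2) (Fin 2) F).mulVec x = y) :
    ((g⁻¹ : GL (Fin 2) F) : Matrix (Fin 2) (Fin 2) F).mulVec y = x := by
  rw [← h, Matrix.mulVec_mulVec, ← Units.val_mul, inv_mul_cancel]
  simp

lemma mem_of_det_one (G' : Subgroup (GL (Fin 2) F))
    (hU : ∀ t : F, Um t ∈ G') (hL : ∀ t : F, Lm t ∈ G') :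
    ∀ M : GL (Fin 2) F, (M : Matrix (Fin 2) (Fin 2) F).det = 1 → M ∈ G' := by
  have key1 : ∀ M : GL (Fin 2) F, (M : Matrix (Fin 2) (Fin 2) F).det = 1 →
      (M : Matrix (Fin 2) (Fin 2) F) 1 0 ≠ 0 → M ∈ G' := by
    intro M hdet hc
    set a := (M : Matrix (Fin 2) (Fin 2) F) 0 0 with ha
    set b := (M : Matrix (Fin 2) (Fin 2) F) 0 1 with hb
    set c := (M : Matrix (Fin 2) (Fin 2) F) 1 0 with hcc
    set d := (M : Matrix (Fin 2) (Fin 2) F) 1 1 with hd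
    rw [Matrix.det_fin_two] at hdet
    have hM : M = Um ((a - 1)/c) * Lm c * Um ((d - 1)/c) := by
      apply Units.ext
      simp only [Units.val_mul]
      ext i j
      fin_cases i <;> fin_cases j <;>
        simp [Um, Lm, Matrix.mul_apply, Fin.sum_univ_two] <;> (try field_simp) <;>
        first | ring1 | linear_combination (-1 : F) * hdet
    rw [hM]
    exact mul_mem (mul_mem (hU _) (hL _)) (hU _)
  intro M hdet
  by_cases hc : (M : Matrix (Fin 2) (Fin 2) F) 1 0 ≠ 0
  · exact key1 M hdet hc
  · push_neg at hc
    have hd : (M : Matrix (Fin 2) (Fin 2) F) 1 1 ≠ 0 := by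
      intro h0
      rw [Matrix.det_fin_two, hc, h0] at hdet
      simp at hdet
    have h1 : ((M * Lm 1 : GL (Fin 2) F) : Matrix (Fin 2) (Fin 2) F).det = 1 := by
      simp only [Units.val_mul, Matrix.det_mul, hdet]
      have : (Lm (1:F) : Matrix (Fin 2) (Fin 2) F).det = 1 := by
        simp [Lm, Matrix.det_fin_two]
      rw [this, one_mul]
    have h2 : ((M * Lm 1 : GL (Fin 2) F) : Matrix (Fin 2) (Fin 2) F) 1 0 ≠ 0 := by
      simp only [Units.val_mul]
      rw [Matrix.mul_apply, Fin.sum_univ_two]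
      simp [Lm, hc]
      exact hd
    have hmem := key1 _ h1 h2
    have hMeq : M = (M * Lm 1) * (Lm 1)⁻¹ := by group
    rw [hMeq]
    exact mul_mem hmem (inv_mem (hL 1))

end Aux

/-- Let `F` be a finite field and `G` a subgroup of `GL₂(F)`. If `G` contains a subgroup
of order `#F` and `G` acts irreducibly on `F²`, then `G` contains `SL₂(F)`. -/
theorem stmt_0 (F : Type*) [Field F] [Fintype F]
    (G : Subgroup (GL (Fin 2) F))
    (hord : ∃ H : Subgroup (GL (Fin 2) F), H ≤ G ∧ Nat.card H = Fintype.card F)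
    (hirr : ∀ W : Submodule F (Fin 2 → F), Module.finrank F W = 1 →
      ¬ (∀ g ∈ G, ∀ v ∈ W, (g : Matrix (Fin 2) (Fin 2) F).mulVec v ∈ W)) :
    ∀ g : GL (Fin 2) F, (g : Matrix (Fin 2) (Fin 2) F).det = 1 → g ∈ G := by
  classical
  obtain ⟨H, hHG, hcard⟩ := hord
  set q := Fintype.card F with hq
  haveI := ringChar.charP F
  set p := ringChar F with hp
  obtain ⟨n, hpprime, hcardF⟩ := FiniteField.card F p
  have hq1 : 1 ≤ q := Fintype.card_pos
  -- every element of H has det 1 and satisfies h^q = 1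
  have hdetone : ∀ h : H, ((h : GL (Fin 2) F) : Matrix (Fin 2) (Fin 2) F).det = 1 := by
    intro h
    set x := ((h : GL (Fin 2) F) : Matrix (Fin 2) (Fin 2) F).det with hx
    have hxu : IsUnit x := (Matrix.isUnit_iff_isUnit_det _).mp (h : GL (Fin 2) F).isUnit
    have hx0 : x ≠ 0 := hxu.ne_zero
    have hpow : ((h : GL (Fin 2) F) : Matrix (Fin 2) (Fin 2) F) ^ q = 1 := by
      have h1 : (h : H) ^ q = 1 := by rw [← hcard]; exact pow_card_eq_one'
      have h2 : ((h : GL (Fin 2) F)) ^ q = 1 := by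
        rw [← SubgroupClass.coe_pow, h1, OneMemClass.coe_one]
      calc ((h : GL (Fin 2) F) : Matrix (Fin 2) (Fin 2) F) ^ q
          = (((h : GL (Fin 2) F)) ^ q : GL (Fin 2) F) := rfl
        _ = 1 := by rw [h2]; rfl
    have hxq : x ^ q = 1 := by
      rw [hx, ← Matrix.det_pow, hpow, Matrix.det_one]
    have hxq1 : x ^ (q - 1) = 1 := FiniteField.pow_card_sub_one_eq_one x hx0
    have : x ^ q = x ^ (q - 1) * x := by
      rw [← pow_succ]; congr 1; omega
    rw [hxq, hxq1, one_mul] at this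
    exact this.symm
  -- Step A: common fixed nonzero vector for H
  have hfix : ∃ v : Fin 2 → F, v ≠ 0 ∧
      ∀ h : H, ((h : GL (Fin 2) F) : Matrix (Fin 2) (Fin 2) F).mulVec v = v := by
    haveI : Fact p.Prime := ⟨hpprime⟩
    have hPG : IsPGroup p H := IsPGroup.of_card (n := n) (by rw [hcard, hq, hcardF])
    letI : MulAction H {v : Fin 2 → F // v ≠ 0} :=
      { smul := fun h x => ⟨((h : GL (Fin 2) F) : Matrix (Fin 2) (Fin 2) F).mulVec x.1,
          GLaux.mulVec_ne_zero _ x.2⟩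
        one_smul := fun x => Subtype.ext (by
          show ((((1 : H) : GL (Fin 2) F)) : Matrix (Fin 2) (Fin 2) F).mulVec x.1 = x.1
          simp)
        mul_smul := fun h h' x => Subtype.ext (by
          show (((h * h' : H) : GL (Fin 2) F) : Matrix (Fin 2) (Fin 2) F).mulVec x.1 =
            ((h : GL (Fin 2) F) : Matrix (Fin 2) (Fin 2) F).mulVec
              (((h' : GL (Fin 2) F) : Matrix (Fin 2) (Fin 2) F).mulVec x.1)
          rw [Matrix.mulVec_mulVec]
          rfl) }
    have hcardα : Nat.card {v : Fin 2 → F // v ≠ 0} = q ^ 2 - 1 := by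
      rw [Nat.card_eq_fintype_card, Fintype.card_subtype_compl (fun v : Fin 2 → F => v = 0),
        Fintype.card_subtype_eq (0 : Fin 2 → F), Fintype.card_fun]
      simp [hq]
    have hndvd : ¬ p ∣ Nat.card {v : Fin 2 → F // v ≠ 0} := by
      rw [hcardα]
      intro hdvd
      have hpq : p ∣ q ^ 2 := by
        rw [hq, hcardF]
        exact dvd_pow (dvd_pow_self p (Nat.pos_iff_ne_zero.mp n.pos)) (by positivity)
      have : p ∣ 1 := by
        have h12 : q ^ 2 - (q ^ 2 - 1) = 1 := by
          have : 1 ≤ q ^ 2 := Nat.one_le_pow _ _ hq1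
          omega
        calc p ∣ q ^ 2 - (q ^ 2 - 1) := Nat.dvd_sub hpq hdvd
          _ = 1 := h12
      exact hpprime.one_lt.ne' (Nat.dvd_one.mp this)
    obtain ⟨⟨v, hv0⟩, hvmem⟩ := hPG.nonempty_fixed_point_of_prime_not_dvd_card _ hndvd
    refine ⟨v, hv0, fun h => ?_⟩
    have := (MulAction.mem_fixedPoints).mp hvmem h
    exact congrArg Subtype.val this
  obtain ⟨v, hv0, hvfix⟩ := hfix
  -- Step B: find g₀ ∈ G with g₀ v ∉ span {v}
  have hspan1 : Module.finrank F (Submodule.span F {v}) = 1 := finrank_span_singleton hv0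
  have hirr' := hirr (Submodule.span F {v}) hspan1
  push_neg at hirr'
  obtain ⟨g₀, hg₀G, u, hu, hgu⟩ := hirr'
  obtain ⟨c, hc⟩ := Submodule.mem_span_singleton.mp hu
  have hc0 : c ≠ 0 := by
    rintro rfl
    apply hgu
    rw [← hc, zero_smul, Matrix.mulVec_zero]
    exact Submodule.zero_mem _
  set w := (g₀ : Matrix (Fin 2) (Fin 2) F).mulVec v with hw
  have hwspan : w ∉ Submodule.span F {v} := by
    intro hmem
    apply hgu
    rw [← hc, Matrix.mulVec_smul]
    exact Submodule.smul_mem _ c hmem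
  -- Step C: change of basis matrix
  set P : Matrix (Fin 2) (Fin 2) F := !![v 0, w 0; v 1, w 1] with hPdef
  have hdetP : P.det ≠ 0 := by
    intro h0
    rw [hPdef, Matrix.det_fin_two_of] at h0
    apply hwspan
    rw [Submodule.mem_span_singleton]
    by_cases hv00 : v 0 ≠ 0
    · refine ⟨w 0 / v 0, ?_⟩
      funext i
      fin_cases i
      · simp; field_simp
      · simp only [Pi.smul_apply, smul_eq_mul, Fin.mk_one]
        field_simp
        linear_combination -h0
    · push_neg at hv00
      have hv1 : v 1 ≠ 0 := by
        intro hv11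
        apply hv0
        funext i
        fin_cases i <;> simp [hv00, hv11]
      refine ⟨w 1 / v 1, ?_⟩
      funext i
      fin_cases i
      · simp only [Pi.smul_apply, smul_eq_mul, Fin.zero_eta]
        field_simp
        rw [hv00] at h0 ⊢
        linear_combination h0
      · simp; field_simp
  have hPu : IsUnit P := (Matrix.isUnit_iff_isUnit_det P).mpr (Ne.isUnit hdetP)
  set Pu : GL (Fin 2) F := hPu.unit with hPudef
  have hPuval : (Pu : Matrix (Fin 2) (Fin 2) F) = P := rfl
  have hPe1 : (Pu : Matrix (Fin 2) (Fin 2) F).mulVec (Pi.single 0 1) = v := by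
    rw [hPuval]
    funext i
    fin_cases i <;> simp [hPdef]
  have hPe2 : (Pu : Matrix (Fin 2) (Fin 2) F).mulVec (Pi.single 1 1) = w := by
    rw [hPuval]
    funext i
    fin_cases i <;> simp [hPdef]
  -- Step D: conjugate subgroup
  set G' : Subgroup (GL (Fin 2) F) := Subgroup.comap (MulAut.conj Pu).toMonoidHom G
    with hG'def
  have hmemG' : ∀ x : GL (Fin 2) F, x ∈ G' ↔ Pu * x * Pu⁻¹ ∈ G := by
    intro x
    rw [hG'def, Subgroup.mem_comap]
    rfl
  -- Step E: G' contains all upper transvections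
  have hform : ∀ h : H, (Pu⁻¹ * (h : GL (Fin 2) F) * Pu) =
      Um (((Pu⁻¹ * (h : GL (Fin 2) F) * Pu : GL (Fin 2) F) : Matrix (Fin 2) (Fin 2) F) 0 1) := by
    intro h
    set K := ((Pu⁻¹ * (h : GL (Fin 2) F) * Pu : GL (Fin 2) F) : Matrix (Fin 2) (Fin 2) F)
      with hK
    have hKe1 : K.mulVec (Pi.single 0 1) = Pi.single 0 1 := by
      rw [hK]
      simp only [Units.val_mul]
      rw [← Matrix.mulVec_mulVec, ← Matrix.mulVec_mulVec, hPe1, hvfix h]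
      exact GLaux.inv_mulVec_eq hPe1
    have h00 : K 0 0 = 1 := by
      have := congrFun hKe1 0
      simpa using this
    have h10 : K 1 0 = 0 := by
      have := congrFun hKe1 1
      simpa using this
    have hdetK : K.det = 1 := by
      rw [hK]
      simp only [Units.val_mul, Matrix.det_mul]
      rw [hdetone h]
      have : ((Pu⁻¹ : GL (Fin 2) F) : Matrix (Fin 2) (Fin 2) F).det *
          ((Pu : GL (Fin 2) F) : Matrix (Fin 2) (Fin 2) F).det = 1 := by
        rw [← Matrix.det_mul, ← Units.val_mul, inv_mul_cancel, Units.val_one, Matrix.det_one]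
      linear_combination this
    have h11 : K 1 1 = 1 := by
      rw [Matrix.det_fin_two, h00, h10] at hdetK
      linear_combination hdetK
    apply Units.ext
    show K = _
    ext i j
    fin_cases i <;> fin_cases j <;> simp [Um, h00, h10, h11]
  have hUmem : ∀ t : F, Um t ∈ G' := by
    have hinj : Function.Injective
        (fun h : H => ((Pu⁻¹ * (h : GL (Fin 2) F) * Pu : GL (Fin 2) F) :
          Matrix (Fin 2) (Fin 2) F) 0 1) := by
      intro h h' heq
      have e1 := hform h
      have e2 := hform h'
      simp only at heq
      rw [heq] at e1
      have : Pu⁻¹ * (h : GL (Fin 2) F) * Pu = Pu⁻¹ * (h' : GL (Fin 2) F) * Pu :=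
        e1.trans e2.symm
      have hcoe : (h : GL (Fin 2) F) = (h' : GL (Fin 2) F) := by
        have := mul_right_cancel this
        exact mul_left_cancel this
      exact Subtype.ext hcoe
    have hbij : Function.Bijective
        (fun h : H => ((Pu⁻¹ * (h : GL (Fin 2) F) * Pu : GL (Fin 2) F) :
          Matrix (Fin 2) (Fin 2) F) 0 1) := by
      haveI : Fintype H := Fintype.ofFinite H
      rw [Fintype.bijective_iff_injective_and_card]
      refine ⟨hinj, ?_⟩
      rw [← Nat.card_eq_fintype_card, hcard, hq]
    intro t
    obtain ⟨h, hh⟩ := hbij.2 t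
    rw [hmemG']
    have : Pu * (Pu⁻¹ * (h : GL (Fin 2) F) * Pu) * Pu⁻¹ = (h : GL (Fin 2) F) := by group
    rw [← hh, ← hform h, this]
    exact hHG h.2
  -- Step G: G' contains all lower transvections
  set a : GL (Fin 2) F := Pu⁻¹ * g₀ * Pu with hadef
  have haG' : a ∈ G' := by
    rw [hmemG']
    have : Pu * (Pu⁻¹ * g₀ * Pu) * Pu⁻¹ = g₀ := by group
    rw [hadef, this]
    exact hg₀G
  set A := ((a : GL (Fin 2) F) : Matrix (Fin 2) (Fin 2) F) with hAdef
  have hAe1 : A.mulVec (Pi.single 0 1) = Pi.single 1 1 := by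
    rw [hAdef, hadef]
    simp only [Units.val_mul]
    rw [← Matrix.mulVec_mulVec, ← Matrix.mulVec_mulVec, hPe1, ← hw]
    exact GLaux.inv_mulVec_eq hPe2
  have hA00 : A 0 0 = 0 := by
    have := congrFun hAe1 0
    simpa using this
  have hA10 : A 1 0 = 1 := by
    have := congrFun hAe1 1
    simpa using this
  have hLmem : ∀ s : F, Lm s ∈ G' := by
    intro s
    have hcomm : a * Um (s * A 0 1) = Lm s * a := by
      apply Units.ext
      simp only [Units.val_mul]
      ext i j
      fin_cases i <;> fin_cases j <;>
        simp [Um, Lm, Matrix.mul_apply, Fin.sum_univ_two, ← hAdef, hA00, hA10] <;> ring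
    have heq : Lm s = a * Um (s * A 0 1) * a⁻¹ := by
      rw [hcomm, mul_inv_cancel_right]
    rw [heq]
    exact mul_mem (mul_mem haG' (hUmem _)) (inv_mem haG')
  -- Final step
  intro g hgdet
  have hdetM : ((Pu⁻¹ * g * Pu : GL (Fin 2) F) : Matrix (Fin 2) (Fin 2) F).det = 1 := by
    simp only [Units.val_mul, Matrix.det_mul]
    rw [hgdet]
    have : ((Pu⁻¹ : GL (Fin 2) F) : Matrix (Fin 2) (Fin 2) F).det *
        ((Pu : GL (Fin 2) F) : Matrix (Fin 2) (Fin 2) F).det = 1 := by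
      rw [← Matrix.det_mul, ← Units.val_mul, inv_mul_cancel, Units.val_one, Matrix.det_one]
    linear_combination this
  have hMmem := mem_of_det_one G' hUmem hLmem _ hdetM
  rw [hmemG'] at hMmem
  have : Pu * (Pu⁻¹ * g * Pu) * Pu⁻¹ = g := by group
  rwa [this] at hMmem
end

section
/- Let A = 𝔽_q[T] and 𝔭 a maximal ideal of A generated by a monic irreducible polynomial of degree n. Let A_𝔭 be the 𝔭-adic completion of A. Let H be a closed subgroup of GL_2(A_𝔭) such that (i) the reduction of H modulo 𝔭 equals GL_2(A/𝔭), (ii) det(H) = A_𝔭^×, and (iii) the image of H ∩ (Id + 𝔭·M_2(A_𝔭)) in (Id + 𝔭·M_2(A_𝔭))/(Id + 𝔭²·M_2(A_𝔭)) contains a non-scalar element. If q ≥ 4, then H = GL_2(A_𝔭). -/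
open Matrix PowerSeries



section Generic
variable {α : Type*} [CommRing α]

/-- all entries divisible by x -/
def DvdE (x : α) (M : Matrix (Fin 2) (Fin 2) α) : Prop := ∀ a b, x ∣ M a b

lemma DvdE.add {x : α} {M N} (h : DvdE x M) (h' : DvdE x N) : DvdE x (M + N) :=
  fun a b => by simpa using dvd_add (h a b) (h' a b)

lemma DvdE.sub {x : α} {M N} (h : DvdE x M) (h' : DvdE x N) : DvdE x (M - N) :=
  fun a b => by simpa using dvd_sub (h a b) (h' a b)

lemma DvdE.neg {x : α} {M} (h : DvdE x M) : DvdE x (-M) :=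
  fun a b => by simpa using (h a b).neg_right

lemma DvdE.mul_left {x : α} {M} (h : DvdE x M) (N) : DvdE x (N * M) := by
  intro a b
  rw [Matrix.mul_apply]
  exact Finset.dvd_sum fun c _ => (h c b).mul_left _

lemma DvdE.mul_right {x : α} {M} (h : DvdE x M) (N) : DvdE x (M * N) := by
  intro a b
  rw [Matrix.mul_apply]
  exact Finset.dvd_sum fun c _ => (h a c).mul_right _

lemma DvdE.mul {x y : α} {M N} (h : DvdE x M) (h' : DvdE y N) : DvdE (x * y) (M * N) := by
  intro a b
  rw [Matrix.mul_apply]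
  exact Finset.dvd_sum fun c _ => mul_dvd_mul (h a c) (h' c b)

lemma DvdE.mono {x y : α} {M} (hxy : x ∣ y) (h : DvdE y M) : DvdE x M :=
  fun a b => hxy.trans (h a b)

lemma DvdE.zero (x : α) : DvdE x 0 := fun a b => by simp

lemma DvdE.smul {x : α} (c : α) {M} (h : DvdE x M) : DvdE x (c • M) :=
  fun a b => by simpa [Matrix.smul_apply] using (h a b).mul_left c

lemma dvdE_inv {x : α} {g h : (Matrix (Fin 2) (Fin 2) α)ˣ}
    (hd : DvdE x ((g : Matrix (Fin 2) (Fin 2) α) - (h : Matrix (Fin 2) (Fin 2) α))) :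
    DvdE x (((g⁻¹ : (Matrix (Fin 2) (Fin 2) α)ˣ) : Matrix (Fin 2) (Fin 2) α) - ((h⁻¹ : (Matrix (Fin 2) (Fin 2) α)ˣ) : Matrix (Fin 2) (Fin 2) α)) := by
  have h1 : ((h : Matrix (Fin 2) (Fin 2) α)) * ((h⁻¹ : (Matrix (Fin 2) (Fin 2) α)ˣ) : Matrix (Fin 2) (Fin 2) α) = 1 := h.mul_inv
  have h2 : (((g⁻¹ : (Matrix (Fin 2) (Fin 2) α)ˣ) : Matrix (Fin 2) (Fin 2) α)) * (g : Matrix (Fin 2) (Fin 2) α) = 1 := g.inv_mul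
  have key : ((g⁻¹ : (Matrix (Fin 2) (Fin 2) α)ˣ) : Matrix (Fin 2) (Fin 2) α) - ((h⁻¹ : (Matrix (Fin 2) (Fin 2) α)ˣ) : Matrix (Fin 2) (Fin 2) α)
      = ((g⁻¹ : (Matrix (Fin 2) (Fin 2) α)ˣ) : Matrix (Fin 2) (Fin 2) α) * (((h : Matrix (Fin 2) (Fin 2) α)) - (g : Matrix (Fin 2) (Fin 2) α)) * ((h⁻¹ : (Matrix (Fin 2) (Fin 2) α)ˣ) : Matrix (Fin 2) (Fin 2) α) := by
    calc ((g⁻¹ : (Matrix (Fin 2) (Fin 2) α)ˣ) : Matrix (Fin 2) (Fin 2) α) - ((h⁻¹ : (Matrix (Fin 2) (Fin 2) α)ˣ) : Matrix (Fin 2) (Fin 2) α)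
        = ((g⁻¹ : (Matrix (Fin 2) (Fin 2) α)ˣ) : Matrix (Fin 2) (Fin 2) α) * ((h : Matrix (Fin 2) (Fin 2) α) * ((h⁻¹ : (Matrix (Fin 2) (Fin 2) α)ˣ) : Matrix (Fin 2) (Fin 2) α)) - (((g⁻¹ : (Matrix (Fin 2) (Fin 2) α)ˣ) : Matrix (Fin 2) (Fin 2) α) * (g : Matrix (Fin 2) (Fin 2) α)) * ((h⁻¹ : (Matrix (Fin 2) (Fin 2) α)ˣ) : Matrix (Fin 2) (Fin 2) α) := by
          rw [h1, h2]; noncomm_ring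
      _ = _ := by noncomm_ring
  have hd' : DvdE x (((h : Matrix (Fin 2) (Fin 2) α)) - (g : Matrix (Fin 2) (Fin 2) α)) := by
    have := hd.neg; rwa [neg_sub] at this
  rw [key]
  exact (hd'.mul_left _).mul_right _

end Generic


section L6
variable {k : Type*} [Field k]

lemma exists_ne_ne [Fintype k] (h : 3 ≤ Fintype.card k) (a b : k) :
    ∃ u : k, u ≠ a ∧ u ≠ b := by
  classical
  by_contra hc
  push_neg at hc
  have hsub : (Finset.univ : Finset k) ⊆ {a, b} := by
    intro u _
    rcases eq_or_ne u a with h1 | h1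
    · simp [h1]
    · simp [hc u h1]
  have := Finset.card_le_card hsub
  have h2 : ({a, b} : Finset k).card ≤ 2 :=
    (Finset.card_insert_le _ _).trans (by simp)
  simp [Finset.card_univ] at this
  omega

lemma L6 [Fintype k] (hcard : 4 ≤ Fintype.card k)
    (V : Set (Matrix (Fin 2) (Fin 2) k))
    (hsub : ∀ A ∈ V, ∀ B ∈ V, A - B ∈ V)
    (hconj : ∀ g g' : Matrix (Fin 2) (Fin 2) k, g * g' = 1 → ∀ A ∈ V, g * A * g' ∈ V)
    (A : Matrix (Fin 2) (Fin 2) k) (hA : A ∈ V)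
    (hns : ¬ (A 0 1 = 0 ∧ A 1 0 = 0 ∧ A 0 0 = A 1 1)) :
    ∀ B : Matrix (Fin 2) (Fin 2) k, B 1 1 = - B 0 0 → B ∈ V := by
  have hcard3 : 3 ≤ Fintype.card k := by omega
  obtain ⟨a, b, c, d, rfl⟩ : ∃ a b c d, A = !![a, b; c, d] :=
    ⟨_, _, _, _, eta_fin_two A⟩
  have h0 : (0 : Matrix (Fin 2) (Fin 2) k) ∈ V := by
    simpa using hsub _ hA _ hA
  have hadd : ∀ P ∈ V, ∀ Q ∈ V, P + Q ∈ V := by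
    intro P hP Q hQ
    have := hsub P hP (0 - Q) (hsub 0 h0 Q hQ)
    simpa using this
  have csub : ∀ g g' P, g * g' = 1 → P ∈ V → g * P * g' - P ∈ V := by
    intro g g' P hgg hP
    exact hsub _ (hconj g g' hgg P hP) P hP
  -- upper unipotent conjugation difference
  have Dt : ∀ x : k, !![x * c, x * (d - a) - x ^ 2 * c; 0, -(x * c)] ∈ V := by
    intro x
    have e : !![(1:k), x; 0, 1] * !![a, b; c, d] * !![1, -x; 0, 1] - !![a, b; c, d]
        = !![x * c, x * (d - a) - x ^ 2 * c; 0, -(x * c)] := by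
      ext i j
      fin_cases i <;> fin_cases j <;>
        simp [Matrix.mul_fin_two] <;> ring
    rw [← e]
    exact csub _ _ _ (by ext i j; fin_cases i <;> fin_cases j <;> simp [Matrix.mul_fin_two]) hA
  -- diagonal conjugation difference (applied to arbitrary member P)
  have Dd : ∀ u : k, u ≠ 0 → ∀ P ∈ V,
      !![(0:k), (u - 1) * P 0 1; (u⁻¹ - 1) * P 1 0, 0] ∈ V := by
    intro u hu P hP
    obtain ⟨p, q, r, s, rfl⟩ : ∃ p q r s, P = !![p, q; r, s] := ⟨_, _, _, _, eta_fin_two P⟩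
    have e : !![u, (0:k); 0, 1] * !![p, q; r, s] * !![u⁻¹, 0; 0, 1] - !![p, q; r, s]
        = !![0, (u - 1) * !![p, q; r, s] 0 1; (u⁻¹ - 1) * !![p, q; r, s] 1 0, 0] := by
      ext i j
      fin_cases i <;> fin_cases j <;>
        simp [Matrix.mul_fin_two] <;> (try field_simp) <;> (try ring)
    rw [← e]
    refine csub _ _ _ ?_ hP
    ext i j; fin_cases i <;> fin_cases j <;> simp [Matrix.mul_fin_two] <;> field_simp
  -- Step 1 : a nonzero multiple of E01 lies in V
  have step1 : ∃ z : k, z ≠ 0 ∧ !![(0:k), z; 0, 0] ∈ V := by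
    obtain ⟨u, hu0, hu1⟩ := exists_ne_ne hcard3 (0 : k) 1
    by_cases hc : c ≠ 0
    · obtain ⟨x, hx0, hx2⟩ := exists_ne_ne hcard3 (0 : k) ((d - a) * c⁻¹)
      have hβ : x * (d - a) - x ^ 2 * c ≠ 0 := by
        have : x * (d - a) - x ^ 2 * c = x * c * ((d - a) * c⁻¹ - x) := by
          field_simp
        rw [this]
        exact mul_ne_zero (mul_ne_zero hx0 hc) (sub_ne_zero.2 (Ne.symm hx2))
      refine ⟨(u - 1) * (x * (d - a) - x ^ 2 * c), mul_ne_zero (sub_ne_zero.2 hu1) hβ, ?_⟩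
      have := Dd u hu0 _ (Dt x)
      simpa using this
    · push_neg at hc
      by_cases had : a = d
      · have hb : b ≠ 0 := by
          intro hb; exact hns ⟨by simp [hb], by simp [hc], by simp [had]⟩
        refine ⟨(u - 1) * b, mul_ne_zero (sub_ne_zero.2 hu1) hb, ?_⟩
        have := Dd u hu0 _ hA
        simp only [hc] at this
        simpa using this
      · refine ⟨d - a, sub_ne_zero.2 (Ne.symm had), ?_⟩
        have := Dt 1
        simp only [hc] at this
        simpa using this
  obtain ⟨z, hz, hzV⟩ := step1
  -- Step 2 : all multiples of E01
  have hE01 : ∀ x : k, !![(0:k), x; 0, 0] ∈ V := by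
    intro x
    rcases eq_or_ne x 0 with rfl | hx
    · have e : (0 : Matrix (Fin 2) (Fin 2) k) = !![(0:k), 0; 0, 0] := by
        ext i j; fin_cases i <;> fin_cases j <;> simp
      rw [← e]; exact h0
    · have hu : x * z⁻¹ ≠ 0 := mul_ne_zero hx (inv_ne_zero hz)
      have e : !![x * z⁻¹, (0:k); 0, 1] * !![(0:k), z; 0, 0] * !![(x * z⁻¹)⁻¹, 0; 0, 1]
          = !![(0:k), x; 0, 0] := by
        ext i j; fin_cases i <;> fin_cases j <;> simp [Matrix.mul_fin_two] <;> field_simp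
      rw [← e]
      refine hconj _ _ ?_ _ hzV
      ext i j; fin_cases i <;> fin_cases j <;> simp [Matrix.mul_fin_two] <;> field_simp
  -- Step 3 : all multiples of E10
  have hE10 : ∀ x : k, !![(0:k), 0; x, 0] ∈ V := by
    intro x
    have e : !![(0:k), 1; 1, 0] * !![(0:k), x; 0, 0] * !![(0:k), 1; 1, 0]
        = !![(0:k), 0; x, 0] := by
      ext i j; fin_cases i <;> fin_cases j <;> simp [Matrix.mul_fin_two]
    rw [← e]
    refine hconj _ _ ?_ _ (hE01 x)
    ext i j; fin_cases i <;> fin_cases j <;> simp [Matrix.mul_fin_two]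
  -- Step 4 : all trace-zero diagonals
  have hDiag : ∀ x : k, !![x, (0:k); 0, -x] ∈ V := by
    intro x
    have m1 : !![(1:k), 0; 1, 1] * !![(0:k), -x; 0, 0] * !![(1:k), 0; -1, 1]
        = !![x, -x; x, -x] := by
      ext i j; fin_cases i <;> fin_cases j <;> simp [Matrix.mul_fin_two] <;> ring
    have h1 : !![x, -x; x, -x] ∈ V := by
      rw [← m1]
      refine hconj _ _ ?_ _ (hE01 (-x))
      ext i j; fin_cases i <;> fin_cases j <;> simp [Matrix.mul_fin_two]
    have h2 : !![x, -x; x, -x] - !![(0:k), -x; 0, 0] - !![(0:k), 0; x, 0]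
        = !![x, (0:k); 0, -x] := by
      ext i j; fin_cases i <;> fin_cases j <;> simp
    rw [← h2]
    exact hsub _ (hsub _ h1 _ (hE01 (-x))) _ (hE10 x)
  -- final assembly
  intro B hB
  obtain ⟨p, q, r, s, rfl⟩ : ∃ p q r s, B = !![p, q; r, s] := ⟨_, _, _, _, eta_fin_two B⟩
  have hB' : s = -p := by simpa using hB
  have e : !![p, (0:k); 0, -p] + !![(0:k), q; 0, 0] + !![(0:k), 0; r, 0] = !![p, q; r, s] := by
    ext i j; fin_cases i <;> fin_cases j <;> simp [hB']
  rw [← e]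
  exact hadd _ (hadd _ (hDiag p) _ (hE01 q)) _ (hE10 r)

end L6


section Comm
variable {k : Type*} [Field k]

/-- explicit GL element from a matrix with explicit inverse -/
def glOf (M N : Matrix (Fin 2) (Fin 2) k) (h1 : M * N = 1) (h2 : N * M = 1) :
    GL (Fin 2) k := ⟨M, N, h1, h2⟩

@[simp] lemma glOf_coe (M N h1 h2) : ((glOf (k := k) M N h1 h2 : GL (Fin 2) k) :
    Matrix (Fin 2) (Fin 2) k) = M := rfl

@[simp] lemma glOf_inv_coe (M N h1 h2) : (((glOf (k := k) M N h1 h2)⁻¹ : GL (Fin 2) k) :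
    Matrix (Fin 2) (Fin 2) k) = N := rfl

lemma sl2_mem_commutator_closure [Fintype k] (hcard : 3 ≤ Fintype.card k)
    (S : Set (Matrix (Fin 2) (Fin 2) k))
    (hmul : ∀ a ∈ S, ∀ b ∈ S, a * b ∈ S)
    (hcomm : ∀ x y : GL (Fin 2) k,
      ((x * y * x⁻¹ * y⁻¹ : GL (Fin 2) k) : Matrix (Fin 2) (Fin 2) k) ∈ S) :
    ∀ m : Matrix (Fin 2) (Fin 2) k, m.det = 1 → m ∈ S := by
  classical
  have h1S : (1 : Matrix (Fin 2) (Fin 2) k) ∈ S := by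
    have := hcomm 1 1
    simpa using this
  obtain ⟨u, hu0, hu1⟩ := exists_ne_ne hcard (0 : k) 1
  have hu1' : u - 1 ≠ 0 := sub_ne_zero.2 hu1
  -- upper transvections
  have hupper : ∀ c : k, !![(1:k), c; 0, 1] ∈ S := by
    intro c
    have hx1 : !![u, (0:k); 0, 1] * !![u⁻¹, 0; 0, 1] = 1 := by
      ext i j; fin_cases i <;> fin_cases j <;> simp [Matrix.mul_fin_two] <;> field_simp
    have hx2 : !![u⁻¹, (0:k); 0, 1] * !![u, 0; 0, 1] = 1 := by
      ext i j; fin_cases i <;> fin_cases j <;> simp [Matrix.mul_fin_two] <;> field_simp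
    have hy1 : !![(1:k), c / (u - 1); 0, 1] * !![1, -(c / (u - 1)); 0, 1] = 1 := by
      ext i j; fin_cases i <;> fin_cases j <;> simp [Matrix.mul_fin_two]
    have hy2 : !![(1:k), -(c / (u - 1)); 0, 1] * !![1, c / (u - 1); 0, 1] = 1 := by
      ext i j; fin_cases i <;> fin_cases j <;> simp [Matrix.mul_fin_two]
    have := hcomm (glOf _ _ hx1 hx2) (glOf _ _ hy1 hy2)
    have e : ((glOf _ _ hx1 hx2 * glOf _ _ hy1 hy2 * (glOf _ _ hx1 hx2)⁻¹ *
        (glOf _ _ hy1 hy2)⁻¹ : GL (Fin 2) k) : Matrix (Fin 2) (Fin 2) k)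
        = !![(1:k), c; 0, 1] := by
      simp only [Units.val_mul, glOf_coe, glOf_inv_coe]
      ext i j; fin_cases i <;> fin_cases j <;> simp [Matrix.mul_fin_two] <;> field_simp <;> ring
    rwa [e] at this
  -- lower transvections
  have hlower : ∀ c : k, !![(1:k), 0; c, 1] ∈ S := by
    intro c
    have hx1 : !![(1:k), (0:k); 0, u] * !![1, 0; 0, u⁻¹] = 1 := by
      ext i j; fin_cases i <;> fin_cases j <;> simp [Matrix.mul_fin_two] <;> field_simp
    have hx2 : !![(1:k), (0:k); 0, u⁻¹] * !![1, 0; 0, u] = 1 := by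
      ext i j; fin_cases i <;> fin_cases j <;> simp [Matrix.mul_fin_two] <;> field_simp
    have hy1 : !![(1:k), 0; c / (u - 1), 1] * !![1, 0; -(c / (u - 1)), 1] = 1 := by
      ext i j; fin_cases i <;> fin_cases j <;> simp [Matrix.mul_fin_two]
    have hy2 : !![(1:k), 0; -(c / (u - 1)), 1] * !![1, 0; c / (u - 1), 1] = 1 := by
      ext i j; fin_cases i <;> fin_cases j <;> simp [Matrix.mul_fin_two]
    have := hcomm (glOf _ _ hx1 hx2) (glOf _ _ hy1 hy2)
    have e : ((glOf _ _ hx1 hx2 * glOf _ _ hy1 hy2 * (glOf _ _ hx1 hx2)⁻¹ *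
        (glOf _ _ hy1 hy2)⁻¹ : GL (Fin 2) k) : Matrix (Fin 2) (Fin 2) k)
        = !![(1:k), 0; c, 1] := by
      simp only [Units.val_mul, glOf_coe, glOf_inv_coe]
      ext i j; fin_cases i <;> fin_cases j <;> simp [Matrix.mul_fin_two] <;> field_simp <;> ring
    rwa [e] at this
  -- diagonal det-one matrices
  have hdiag : ∀ e : k, e ≠ 0 → !![e, (0:k); 0, e⁻¹] ∈ S := by
    intro e he
    have hx1 : !![e, (0:k); 0, 1] * !![e⁻¹, 0; 0, 1] = 1 := by
      ext i j; fin_cases i <;> fin_cases j <;> simp [Matrix.mul_fin_two] <;> field_simp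
    have hx2 : !![e⁻¹, (0:k); 0, 1] * !![e, 0; 0, 1] = 1 := by
      ext i j; fin_cases i <;> fin_cases j <;> simp [Matrix.mul_fin_two] <;> field_simp
    have hw : !![(0:k), 1; 1, 0] * !![(0:k), 1; 1, 0] = 1 := by
      ext i j; fin_cases i <;> fin_cases j <;> simp [Matrix.mul_fin_two]
    have := hcomm (glOf _ _ hx1 hx2) (glOf _ _ hw hw)
    have e2 : ((glOf _ _ hx1 hx2 * glOf _ _ hw hw * (glOf _ _ hx1 hx2)⁻¹ *
        (glOf _ _ hw hw)⁻¹ : GL (Fin 2) k) : Matrix (Fin 2) (Fin 2) k)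
        = !![e, (0:k); 0, e⁻¹] := by
      simp only [Units.val_mul, glOf_coe, glOf_inv_coe]
      ext i j; fin_cases i <;> fin_cases j <;> simp [Matrix.mul_fin_two] <;> field_simp
    rwa [e2] at this
  -- every transvection structure matrix lies in S
  have htrans : ∀ t : TransvectionStruct (Fin 2) k, t.toMatrix ∈ S := by
    rintro ⟨i, j, hij, c⟩
    rw [TransvectionStruct.toMatrix_mk]
    fin_cases i <;> fin_cases j <;> try (exfalso; exact hij rfl)
    · show transvection (0 : Fin 2) 1 c ∈ S
      have e : transvection (0 : Fin 2) 1 c = !![(1:k), c; 0, 1] := by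
        ext a b; fin_cases a <;> fin_cases b <;>
          simp [Matrix.transvection, Matrix.single]
      rw [e]; exact hupper c
    · show transvection (1 : Fin 2) 0 c ∈ S
      have e : transvection (1 : Fin 2) 0 c = !![(1:k), 0; c, 1] := by
        ext a b; fin_cases a <;> fin_cases b <;>
          simp [Matrix.transvection, Matrix.single]
      rw [e]; exact hlower c
  have hlist : ∀ L : List (TransvectionStruct (Fin 2) k),
      (L.map TransvectionStruct.toMatrix).prod ∈ S := by
    intro L
    induction L with
    | nil => simpa using h1S
    | cons t L ih =>
      rw [List.map_cons, List.prod_cons]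
      exact hmul _ (htrans t) _ ih
  intro m hm
  obtain ⟨L, L', D, hLD⟩ := Pivot.exists_list_transvec_mul_diagonal_mul_list_transvec m
  have hdetD : D 0 * D 1 = 1 := by
    have h1 : det m = det ((L.map TransvectionStruct.toMatrix).prod) * det (diagonal D) *
        det ((L'.map TransvectionStruct.toMatrix).prod) := by
      rw [hLD, det_mul, det_mul]
    rw [TransvectionStruct.det_toMatrix_prod, TransvectionStruct.det_toMatrix_prod, hm,
      det_diagonal] at h1
    have : ∏ i : Fin 2, D i = D 0 * D 1 := by simp [Fin.prod_univ_two]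
    rw [this] at h1
    simpa using h1.symm
  have hD0 : D 0 ≠ 0 := by
    intro h; rw [h] at hdetD; simp at hdetD
  have hdiagD : diagonal D ∈ S := by
    have e : diagonal D = !![D 0, (0:k); 0, (D 0)⁻¹] := by
      have hD1 : D 1 = (D 0)⁻¹ := by field_simp; linear_combination hdetD
      ext a b; fin_cases a <;> fin_cases b <;> simp [Matrix.diagonal, hD1]
    rw [e]; exact hdiag (D 0) hD0
  rw [hLD]
  exact hmul _ (hmul _ (hlist L) _ hdiagD) _ (hlist L')

end Comm

section PS
variable {k : Type*} [Field k]

/-- constant lift of a matrix over `k` to matrices over `k[[X]]` -/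
noncomputable def emb (A : Matrix (Fin 2) (Fin 2) k) :
    Matrix (Fin 2) (Fin 2) (PowerSeries k) := A.map ((PowerSeries.C (R := k)))

/-- reduction mod X -/
noncomputable def red (E : Matrix (Fin 2) (Fin 2) (PowerSeries k)) :
    Matrix (Fin 2) (Fin 2) k := E.map ((PowerSeries.constantCoeff (R := k)))

/-- `1 + Xⁱ • emb A` -/
noncomputable def lv (i : ℕ) (A : Matrix (Fin 2) (Fin 2) k) :
    Matrix (Fin 2) (Fin 2) (PowerSeries k) :=
  1 + ((X : PowerSeries k) ^ i) • emb A

lemma emb_mul (A B : Matrix (Fin 2) (Fin 2) k) : emb (A * B) = emb A * emb B :=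
  Matrix.map_mul

lemma emb_add (A B : Matrix (Fin 2) (Fin 2) k) : emb (A + B) = emb A + emb B := by
  unfold emb; ext a b; simp

lemma emb_zero : emb (0 : Matrix (Fin 2) (Fin 2) k) = 0 := by
  unfold emb; ext a b; simp

lemma red_mul (E F : Matrix (Fin 2) (Fin 2) (PowerSeries k)) :
    red (E * F) = red E * red F := Matrix.map_mul

lemma red_add (E F : Matrix (Fin 2) (Fin 2) (PowerSeries k)) :
    red (E + F) = red E + red F := by
  unfold red; ext a b; simp

lemma red_sub (E F : Matrix (Fin 2) (Fin 2) (PowerSeries k)) :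
    red (E - F) = red E - red F := by
  unfold red; ext a b; simp

lemma red_one : red (1 : Matrix (Fin 2) (Fin 2) (PowerSeries k)) = 1 := by
  unfold red; exact Matrix.map_one _ (by simp) (by simp)

lemma red_emb (A : Matrix (Fin 2) (Fin 2) k) : red (emb A) = A := by
  unfold red emb; ext a b; simp

lemma det_red (E : Matrix (Fin 2) (Fin 2) (PowerSeries k)) :
    (red E).det = (PowerSeries.constantCoeff (R := k)) E.det := by
  unfold red
  exact (((PowerSeries.constantCoeff (R := k))).map_det E).symm

lemma dvdE_X_iff_red {E : Matrix (Fin 2) (Fin 2) (PowerSeries k)} :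
    DvdE (X : PowerSeries k) E ↔ red E = 0 := by
  constructor
  · intro h; ext a b
    simpa [red, PowerSeries.X_dvd_iff] using (PowerSeries.X_dvd_iff.1 (h a b))
  · intro h a b
    rw [PowerSeries.X_dvd_iff]
    have := congrFun (congrFun h a) b
    simpa [red] using this

lemma red_lv (i : ℕ) (hi : 1 ≤ i) (A : Matrix (Fin 2) (Fin 2) k) : red (lv i A) = 1 := by
  have h : red (((X : PowerSeries k) ^ i) • emb A) = 0 := by
    apply dvdE_X_iff_red.1
    intro a b
    simp only [Matrix.smul_apply, smul_eq_mul]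
    exact Dvd.dvd.mul_right (dvd_pow_self _ (by omega)) _
  unfold lv
  rw [red_add, red_one, h, add_zero]

lemma dvdE_smul_self (x : PowerSeries k) (M : Matrix (Fin 2) (Fin 2) (PowerSeries k)) :
    DvdE x (x • M) := fun a b => by simp [Matrix.smul_apply]

/-- the level-i coefficient matrix -/
noncomputable def coefM (i : ℕ) (E : Matrix (Fin 2) (Fin 2) (PowerSeries k)) :
    Matrix (Fin 2) (Fin 2) k :=
  Matrix.of fun a b => PowerSeries.coeff (R := k) i ((E - 1) a b)

lemma coefM_spec (i : ℕ) (E : Matrix (Fin 2) (Fin 2) (PowerSeries k))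
    (h : DvdE ((X : PowerSeries k) ^ i) (E - 1)) :
    DvdE ((X : PowerSeries k) ^ (i + 1)) (E - lv i (coefM i E)) := by
  intro a b
  rw [PowerSeries.X_pow_dvd_iff]
  intro m hm
  have he : (E - lv i (coefM i E)) a b
      = (E - 1) a b - (X : PowerSeries k) ^ i * (PowerSeries.C (R := k)) (coefM i E a b) := by
    simp [lv, emb, Matrix.sub_apply, Matrix.add_apply, Matrix.smul_apply]
    ring
  rw [he, map_sub]
  rcases Nat.lt_or_ge m i with hmi | hmi
  · have h1 : PowerSeries.coeff (R := k) m ((E - 1) a b) = 0 :=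
      (PowerSeries.X_pow_dvd_iff.1 (h a b)) m hmi
    have h2 : PowerSeries.coeff (R := k) m ((X : PowerSeries k) ^ i * (PowerSeries.C (R := k)) (coefM i E a b)) = 0 :=
      (PowerSeries.X_pow_dvd_iff.1 (dvd_mul_right _ _)) m hmi
    rw [h1, h2, sub_zero]
  · have hmi' : m = i := by omega
    subst hmi'
    have h2 : PowerSeries.coeff (R := k) m ((X : PowerSeries k) ^ m * (PowerSeries.C (R := k)) (coefM m E a b))
        = coefM m E a b := by
      have := PowerSeries.coeff_X_pow_mul ((PowerSeries.C (R := k)) (coefM m E a b)) m 0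
      simpa using this
    rw [h2, coefM]
    simp [sub_self]

lemma coefM_trace (i : ℕ) (hi : 1 ≤ i) (E : Matrix (Fin 2) (Fin 2) (PowerSeries k))
    (h : DvdE ((X : PowerSeries k) ^ i) (E - 1)) (hdet : E.det = 1) :
    coefM i E 1 1 = - (coefM i E 0 0) := by
  set f := E - 1 with hf
  have e00 : E 0 0 = 1 + f 0 0 := by simp [hf]
  have e11 : E 1 1 = 1 + f 1 1 := by simp [hf]
  have e01 : E 0 1 = f 0 1 := by simp [hf]
  have e10 : E 1 0 = f 1 0 := by simp [hf]
  have hd : f 0 0 + f 1 1 + (f 0 0 * f 1 1 - f 0 1 * f 1 0) = 0 := by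
    have := Matrix.det_fin_two E
    rw [hdet, e00, e11, e01, e10] at this
    linear_combination -this
  have hcoeff := congrArg (PowerSeries.coeff (R := k) i) hd
  rw [map_add, map_add, map_sub] at hcoeff
  have hprod : ∀ a b c d : Fin 2, PowerSeries.coeff (R := k) i (f a b * f c d) = 0 := by
    intro a b c d
    have : (X : PowerSeries k) ^ (i + 1) ∣ f a b * f c d := by
      have h2 : (X : PowerSeries k) ^ (i + i) ∣ f a b * f c d := by
        rw [pow_add]; exact mul_dvd_mul (h a b) (h c d)
      exact (pow_dvd_pow _ (by omega)).trans h2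
    exact (PowerSeries.X_pow_dvd_iff.1 this) i (by omega)
  rw [hprod, hprod] at hcoeff
  have : PowerSeries.coeff (R := k) i (f 0 0) + PowerSeries.coeff (R := k) i (f 1 1) = 0 := by
    simpa using hcoeff
  simp only [coefM, Matrix.of_apply]
  linear_combination this

end PS

section ApxAlg
variable {k : Type*} [Field k]

lemma emb_sub (A B : Matrix (Fin 2) (Fin 2) k) : emb (A - B) = emb A - emb B := by
  unfold emb; ext a b; simp

lemma lv_zero (i : ℕ) : lv i (0 : Matrix (Fin 2) (Fin 2) k) = 1 := by
  rw [lv, emb_zero, smul_zero, add_zero]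

lemma red_coe_map (g : GL (Fin 2) (PowerSeries k)) :
    red (g : Matrix (Fin 2) (Fin 2) (PowerSeries k))
      = (Matrix.GeneralLinearGroup.map ((PowerSeries.constantCoeff (R := k))) g :
          Matrix (Fin 2) (Fin 2) k) := rfl

lemma lv_mul {i : ℕ} (hi : 1 ≤ i) {A B : Matrix (Fin 2) (Fin 2) k}
    {E F : Matrix (Fin 2) (Fin 2) (PowerSeries k)}
    (hE : DvdE ((X : PowerSeries k) ^ (i + 1)) (E - lv i A))
    (hF : DvdE ((X : PowerSeries k) ^ (i + 1)) (F - lv i B)) :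
    DvdE ((X : PowerSeries k) ^ (i + 1)) (E * F - lv i (A + B)) := by
  have expand : lv i A * lv i B
      = 1 + ((X : PowerSeries k) ^ i) • emb A + ((X : PowerSeries k) ^ i) • emb B
        + ((X : PowerSeries k) ^ i * (X : PowerSeries k) ^ i) • (emb A * emb B) := by
    rw [lv, lv, mul_add, mul_one, add_mul, one_mul, smul_mul_smul_comm]
    abel
  have h3 : lv i A * lv i B - lv i (A + B)
      = ((X : PowerSeries k) ^ i * (X : PowerSeries k) ^ i) • (emb A * emb B) := by
    rw [expand, lv, emb_add, smul_add]
    abel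
  have key : E * F - lv i (A + B)
      = (E - lv i A) * F + lv i A * (F - lv i B) + (lv i A * lv i B - lv i (A + B)) := by
    noncomm_ring
  rw [key]
  refine ((hE.mul_right F).add (hF.mul_left (lv i A))).add ?_
  rw [h3]
  refine DvdE.mono ?_ (dvdE_smul_self _ _)
  rw [← pow_add]
  exact pow_dvd_pow _ (by omega)

lemma lv_inv {i : ℕ} (hi : 1 ≤ i) {A : Matrix (Fin 2) (Fin 2) k}
    {g : GL (Fin 2) (PowerSeries k)}
    (hg : DvdE ((X : PowerSeries k) ^ (i + 1))
      ((g : Matrix (Fin 2) (Fin 2) (PowerSeries k)) - lv i A)) :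
    DvdE ((X : PowerSeries k) ^ (i + 1))
      (((g⁻¹ : GL (Fin 2) (PowerSeries k)) : Matrix (Fin 2) (Fin 2) (PowerSeries k))
        - lv i (-A)) := by
  have h0 : DvdE ((X : PowerSeries k) ^ (i + 1)) (lv i A - lv i A) := by
    rw [sub_self]; exact DvdE.zero _
  have h0' : DvdE ((X : PowerSeries k) ^ (i + 1)) (lv i (-A) - lv i (-A)) := by
    rw [sub_self]; exact DvdE.zero _
  have hmul : DvdE ((X : PowerSeries k) ^ (i + 1)) (lv i A * lv i (-A) - 1) := by
    have := lv_mul hi h0 h0'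
    rwa [add_neg_cancel, lv_zero] at this
  have key : ((g⁻¹ : GL (Fin 2) (PowerSeries k)) : Matrix (Fin 2) (Fin 2) (PowerSeries k))
        - lv i (-A)
      = ((g⁻¹ : GL (Fin 2) (PowerSeries k)) : Matrix (Fin 2) (Fin 2) (PowerSeries k)) *
        (-(((g : Matrix (Fin 2) (Fin 2) (PowerSeries k)) - lv i A) * lv i (-A)
          + (lv i A * lv i (-A) - 1))) := by
    have e1 : (1 : Matrix (Fin 2) (Fin 2) (PowerSeries k))
          - (g : Matrix (Fin 2) (Fin 2) (PowerSeries k)) * lv i (-A)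
        = -(((g : Matrix (Fin 2) (Fin 2) (PowerSeries k)) - lv i A) * lv i (-A)
          + (lv i A * lv i (-A) - 1)) := by noncomm_ring
    rw [← e1, mul_sub, mul_one, ← Matrix.mul_assoc]
    rw [show ((g⁻¹ : GL (Fin 2) (PowerSeries k)) : Matrix (Fin 2) (Fin 2) (PowerSeries k)) *
        (g : Matrix (Fin 2) (Fin 2) (PowerSeries k)) = 1 from g.inv_mul]
    rw [Matrix.one_mul]
  rw [key]
  exact (((hg.mul_right _).add hmul).neg).mul_left _

lemma lv_conj {i : ℕ} {A : Matrix (Fin 2) (Fin 2) k}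
    {g : GL (Fin 2) (PowerSeries k)} {x : GL (Fin 2) k}
    (hgx : Matrix.GeneralLinearGroup.map ((PowerSeries.constantCoeff (R := k))) g = x)
    {E : Matrix (Fin 2) (Fin 2) (PowerSeries k)}
    (hE : DvdE ((X : PowerSeries k) ^ (i + 1)) (E - lv i A)) :
    DvdE ((X : PowerSeries k) ^ (i + 1))
      ((g : Matrix (Fin 2) (Fin 2) (PowerSeries k)) * E *
        ((g⁻¹ : GL (Fin 2) (PowerSeries k)) : Matrix (Fin 2) (Fin 2) (PowerSeries k))
        - lv i ((x : Matrix (Fin 2) (Fin 2) k) * A *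
            ((x⁻¹ : GL (Fin 2) k) : Matrix (Fin 2) (Fin 2) k))) := by
  set G : Matrix (Fin 2) (Fin 2) (PowerSeries k) := ↑g with hG
  set G' : Matrix (Fin 2) (Fin 2) (PowerSeries k) := ↑g⁻¹ with hG'
  have hGG' : G * G' = 1 := g.mul_inv
  have hredG : red G = (x : Matrix (Fin 2) (Fin 2) k) := by
    rw [hG, red_coe_map, hgx]
  have hredG' : red G' = ((x⁻¹ : GL (Fin 2) k) : Matrix (Fin 2) (Fin 2) k) := by
    rw [hG', red_coe_map, map_inv, hgx]
  set B : Matrix (Fin 2) (Fin 2) k :=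
    (x : Matrix (Fin 2) (Fin 2) k) * A * ((x⁻¹ : GL (Fin 2) k) : Matrix (Fin 2) (Fin 2) k)
    with hB
  have key : G * E * G' - lv i B
      = G * (E - lv i A) * G'
        + ((X : PowerSeries k) ^ i) • (G * emb A * G' - emb B) := by
    have e1 : G * lv i A * G' = G * G' + ((X : PowerSeries k) ^ i) • (G * emb A * G') := by
      rw [lv, mul_add, mul_one, add_mul, Matrix.mul_smul, Matrix.smul_mul]
    have e2 : G * E * G' = G * (E - lv i A) * G' + G * lv i A * G' := by noncomm_ring
    rw [e2, e1, hGG']; simp only [lv, smul_sub]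
    abel
  rw [key]
  refine ((hE.mul_left G).mul_right G').add ?_
  have hz : DvdE (X : PowerSeries k) (G * emb A * G' - emb B) := by
    rw [dvdE_X_iff_red, red_sub, red_mul, red_mul, red_emb, red_emb, hredG, hredG', hB,
      sub_self]
  intro a b
  rw [Matrix.smul_apply, smul_eq_mul, pow_succ]
  exact mul_dvd_mul dvd_rfl (hz a b)

end ApxAlg

section Bracket
variable {k : Type*} [Field k]

lemma isUnit_lv (i : ℕ) (hi : 1 ≤ i) (A : Matrix (Fin 2) (Fin 2) k) :
    IsUnit (lv i A) := by
  rw [Matrix.isUnit_iff_isUnit_det]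
  rw [PowerSeries.isUnit_iff_constantCoeff]
  have : ((PowerSeries.constantCoeff (R := k))) (lv i A).det = (red (lv i A)).det :=
    RingHom.map_det _ _
  rw [this, red_lv i hi, Matrix.det_one]
  exact isUnit_one

lemma dvdE_X_coe_sub_one {j : ℕ} (hj : 1 ≤ j) {A : Matrix (Fin 2) (Fin 2) k}
    {g : GL (Fin 2) (PowerSeries k)}
    (hg : DvdE ((X : PowerSeries k) ^ (j + 1))
      ((g : Matrix (Fin 2) (Fin 2) (PowerSeries k)) - lv j A)) :
    DvdE (X : PowerSeries k) ((g : Matrix (Fin 2) (Fin 2) (PowerSeries k)) - 1) := by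
  have e : (g : Matrix (Fin 2) (Fin 2) (PowerSeries k)) - 1
      = ((g : Matrix (Fin 2) (Fin 2) (PowerSeries k)) - lv j A)
        + ((X : PowerSeries k) ^ j) • emb A := by
    rw [lv]; abel
  rw [e]
  refine DvdE.add (DvdE.mono (dvd_pow_self _ (by omega)) hg) ?_
  refine DvdE.mono (dvd_pow_self _ (by omega)) (dvdE_smul_self _ _)

lemma dvdE_X_inv_coe_sub_one {g : GL (Fin 2) (PowerSeries k)}
    (hg : DvdE (X : PowerSeries k) ((g : Matrix (Fin 2) (Fin 2) (PowerSeries k)) - 1)) :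
    DvdE (X : PowerSeries k)
      (((g⁻¹ : GL (Fin 2) (PowerSeries k)) : Matrix (Fin 2) (Fin 2) (PowerSeries k)) - 1) := by
  have := dvdE_inv (x := (X : PowerSeries k)) (g := g) (h := 1) (by simpa using hg)
  simpa using this

lemma lv_bracket {i j : ℕ} (hi : 1 ≤ i) (hj : 1 ≤ j) {A B : Matrix (Fin 2) (Fin 2) k}
    {g h : GL (Fin 2) (PowerSeries k)}
    (hg : DvdE ((X : PowerSeries k) ^ (j + 1))
      ((g : Matrix (Fin 2) (Fin 2) (PowerSeries k)) - lv j A))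
    (hh : DvdE ((X : PowerSeries k) ^ (i + 1))
      ((h : Matrix (Fin 2) (Fin 2) (PowerSeries k)) - lv i B)) :
    DvdE ((X : PowerSeries k) ^ (j + i + 1))
      (((g * h * g⁻¹ * h⁻¹ : GL (Fin 2) (PowerSeries k)) :
          Matrix (Fin 2) (Fin 2) (PowerSeries k)) - lv (j + i) (A * B - B * A)) := by
  set G : Matrix (Fin 2) (Fin 2) (PowerSeries k) := ↑g with hGdef
  set Hm : Matrix (Fin 2) (Fin 2) (PowerSeries k) := ↑h with hHdef
  set G' : Matrix (Fin 2) (Fin 2) (PowerSeries k) := ↑g⁻¹ with hG'def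
  set H' : Matrix (Fin 2) (Fin 2) (PowerSeries k) := ↑h⁻¹ with hH'def
  set P : Matrix (Fin 2) (Fin 2) (PowerSeries k) := ((X : PowerSeries k) ^ j) • emb A with hPdef
  set Q : Matrix (Fin 2) (Fin 2) (PowerSeries k) := ((X : PowerSeries k) ^ i) • emb B with hQdef
  set W : Matrix (Fin 2) (Fin 2) (PowerSeries k)
    := ((X : PowerSeries k) ^ (j + i)) • emb (A * B - B * A) with hWdef
  set Δ : Matrix (Fin 2) (Fin 2) (PowerSeries k) := G - 1 - P with hΔdef
  set Δ' : Matrix (Fin 2) (Fin 2) (PowerSeries k) := Hm - 1 - Q with hΔ'def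
  have hΔdvd : DvdE ((X : PowerSeries k) ^ (j + 1)) Δ := by
    have : Δ = G - lv j A := by rw [hΔdef, lv]; abel
    rw [this]; exact hg
  have hΔ'dvd : DvdE ((X : PowerSeries k) ^ (i + 1)) Δ' := by
    have : Δ' = Hm - lv i B := by rw [hΔ'def, lv]; abel
    rw [this]; exact hh
  have hPdvd : DvdE ((X : PowerSeries k) ^ j) P := dvdE_smul_self _ _
  have hQdvd : DvdE ((X : PowerSeries k) ^ i) Q := dvdE_smul_self _ _
  have hGid : G = 1 + P + Δ := by rw [hΔdef]; abel
  have hHid : Hm = 1 + Q + Δ' := by rw [hΔ'def]; abel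
  -- step 1 : commutator numerator
  have hPQW : P * Q - Q * P - W = 0 := by
    have e1 : P * Q = ((X : PowerSeries k) ^ (j + i)) • emb (A * B) := by
      rw [hPdef, hQdef, smul_mul_smul_comm, ← emb_mul, ← pow_add]
    have e2 : Q * P = ((X : PowerSeries k) ^ (j + i)) • emb (B * A) := by
      rw [hQdef, hPdef, smul_mul_smul_comm, ← emb_mul, ← pow_add, add_comm i j]
    rw [e1, e2, hWdef, emb_sub, smul_sub]
    abel
  have c1 : DvdE ((X : PowerSeries k) ^ (j + i + 1)) (G * Hm - Hm * G - W) := by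
    have key : (1 + P + Δ) * (1 + Q + Δ') - (1 + Q + Δ') * (1 + P + Δ) - W
        = (P * Δ' - Δ' * P) + (Δ * Q - Q * Δ) + (Δ * Δ' - Δ' * Δ)
          + (P * Q - Q * P - W) := by noncomm_ring
    rw [hGid, hHid, key, hPQW, add_zero]
    have t1 : DvdE ((X : PowerSeries k) ^ (j + i + 1)) (P * Δ' - Δ' * P) := by
      refine DvdE.sub ?_ ?_
      · exact DvdE.mono (by rw [← pow_add]; exact pow_dvd_pow _ (by omega)) (hPdvd.mul hΔ'dvd)
      · exact DvdE.mono (by rw [← pow_add]; exact pow_dvd_pow _ (by omega)) (hΔ'dvd.mul hPdvd)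
    have t2 : DvdE ((X : PowerSeries k) ^ (j + i + 1)) (Δ * Q - Q * Δ) := by
      refine DvdE.sub ?_ ?_
      · exact DvdE.mono (by rw [← pow_add]; exact pow_dvd_pow _ (by omega)) (hΔdvd.mul hQdvd)
      · exact DvdE.mono (by rw [← pow_add]; exact pow_dvd_pow _ (by omega)) (hQdvd.mul hΔdvd)
    have t3 : DvdE ((X : PowerSeries k) ^ (j + i + 1)) (Δ * Δ' - Δ' * Δ) := by
      refine DvdE.sub ?_ ?_
      · exact DvdE.mono (by rw [← pow_add]; exact pow_dvd_pow _ (by omega)) (hΔdvd.mul hΔ'dvd)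
      · exact DvdE.mono (by rw [← pow_add]; exact pow_dvd_pow _ (by omega)) (hΔ'dvd.mul hΔdvd)
    exact (t1.add t2).add t3
  -- step 2 : the tail G'H' is ≡ 1 mod X
  have hG'1 : DvdE (X : PowerSeries k) (G' - 1) :=
    dvdE_X_inv_coe_sub_one (dvdE_X_coe_sub_one hj hg)
  have hH'1 : DvdE (X : PowerSeries k) (H' - 1) :=
    dvdE_X_inv_coe_sub_one (dvdE_X_coe_sub_one hi hh)
  have hGH'1 : DvdE (X : PowerSeries k) (G' * H' - 1) := by
    have e : G' * H' - 1 = (G' - 1) * H' + (H' - 1) := by noncomm_ring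
    rw [e]
    exact (hG'1.mul_right _).add hH'1
  -- step 3 : assemble
  have hGG' : G * G' = 1 := g.mul_inv
  have hHH' : Hm * H' = 1 := h.mul_inv
  have hcoe : ((g * h * g⁻¹ * h⁻¹ : GL (Fin 2) (PowerSeries k)) :
      Matrix (Fin 2) (Fin 2) (PowerSeries k)) = G * Hm * G' * H' := by
    rw [Units.val_mul, Units.val_mul, Units.val_mul]
  have h4 : Hm * G * (G' * H') = 1 := by
    rw [Matrix.mul_assoc Hm G _, ← Matrix.mul_assoc G G' H', hGG', Matrix.one_mul, hHH']
  have key2 : G * Hm * G' * H' - lv (j + i) (A * B - B * A)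
      = (G * Hm - Hm * G - W) * (G' * H') + W * (G' * H' - 1) := by
    have hlv : lv (j + i) (A * B - B * A) = 1 + W := by rw [lv, hWdef]
    have expand : (G * Hm - Hm * G - W) * (G' * H') + W * (G' * H' - 1)
        = G * Hm * (G' * H') - Hm * G * (G' * H') - W := by noncomm_ring
    rw [hlv, expand, h4, ← Matrix.mul_assoc]
    abel
  rw [hcoe, key2]
  refine (c1.mul_right _).add ?_
  exact DvdE.mono (by rw [← pow_succ])
    ((dvdE_smul_self _ _).mul hGH'1)

end Bracket

section MainLemmas
variable {k : Type*} [Field k]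

lemma detcomm (a b : GL (Fin 2) (PowerSeries k)) :
    ((a * b * a⁻¹ * b⁻¹ : GL (Fin 2) (PowerSeries k)) :
      Matrix (Fin 2) (Fin 2) (PowerSeries k)).det = 1 := by
  rw [Units.val_mul, Units.val_mul, Units.val_mul, det_mul, det_mul, det_mul]
  have h1 : ((a : Matrix (Fin 2) (Fin 2) (PowerSeries k)).det) *
      (((a⁻¹ : GL (Fin 2) (PowerSeries k)) : Matrix (Fin 2) (Fin 2) (PowerSeries k)).det) = 1 := by
    rw [← det_mul, Units.mul_inv, det_one]
  have h2 : ((b : Matrix (Fin 2) (Fin 2) (PowerSeries k)).det) *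
      (((b⁻¹ : GL (Fin 2) (PowerSeries k)) : Matrix (Fin 2) (Fin 2) (PowerSeries k)).det) = 1 := by
    rw [← det_mul, Units.mul_inv, det_one]
  calc (a : Matrix (Fin 2) (Fin 2) (PowerSeries k)).det *
        (b : Matrix (Fin 2) (Fin 2) (PowerSeries k)).det *
        ((a⁻¹ : GL (Fin 2) (PowerSeries k)) : Matrix (Fin 2) (Fin 2) (PowerSeries k)).det *
        ((b⁻¹ : GL (Fin 2) (PowerSeries k)) : Matrix (Fin 2) (Fin 2) (PowerSeries k)).det
      = ((a : Matrix (Fin 2) (Fin 2) (PowerSeries k)).det *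
          ((a⁻¹ : GL (Fin 2) (PowerSeries k)) : Matrix (Fin 2) (Fin 2) (PowerSeries k)).det) *
        ((b : Matrix (Fin 2) (Fin 2) (PowerSeries k)).det *
          ((b⁻¹ : GL (Fin 2) (PowerSeries k)) : Matrix (Fin 2) (Fin 2) (PowerSeries k)).det) := by
        ring
    _ = 1 := by rw [h1, h2, one_mul]

lemma det_inv_one {a : GL (Fin 2) (PowerSeries k)}
    (ha : (a : Matrix (Fin 2) (Fin 2) (PowerSeries k)).det = 1) :
    ((a⁻¹ : GL (Fin 2) (PowerSeries k)) : Matrix (Fin 2) (Fin 2) (PowerSeries k)).det = 1 := by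
  have h1 : ((a : Matrix (Fin 2) (Fin 2) (PowerSeries k)).det) *
      (((a⁻¹ : GL (Fin 2) (PowerSeries k)) : Matrix (Fin 2) (Fin 2) (PowerSeries k)).det) = 1 := by
    rw [← det_mul, Units.mul_inv, det_one]
  rwa [ha, one_mul] at h1

/-- W-fullness : if the det-1 congruence set at level i contains a nonscalar element,
it contains every trace-zero matrix. -/
lemma Wfull [Fintype k] (hk4 : 4 ≤ Fintype.card k)
    (H : Subgroup (GL (Fin 2) (PowerSeries k)))
    (hred : ∀ m : GL (Fin 2) k, ∃ h ∈ H,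
      Matrix.GeneralLinearGroup.map ((PowerSeries.constantCoeff (R := k))) h = m)
    (i : ℕ) (hi : 1 ≤ i)
    (N : Matrix (Fin 2) (Fin 2) k) (hNns : ¬ (N 0 1 = 0 ∧ N 1 0 = 0 ∧ N 0 0 = N 1 1))
    (hN : ∃ e ∈ H, ((e : GL (Fin 2) (PowerSeries k)) :
        Matrix (Fin 2) (Fin 2) (PowerSeries k)).det = 1 ∧
        DvdE ((X : PowerSeries k) ^ (i + 1))
          (((e : GL (Fin 2) (PowerSeries k)) : Matrix (Fin 2) (Fin 2) (PowerSeries k)) - lv i N)) :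
    ∀ A : Matrix (Fin 2) (Fin 2) k, A 1 1 = - (A 0 0) →
      ∃ e ∈ H, ((e : GL (Fin 2) (PowerSeries k)) :
        Matrix (Fin 2) (Fin 2) (PowerSeries k)).det = 1 ∧
        DvdE ((X : PowerSeries k) ^ (i + 1))
          (((e : GL (Fin 2) (PowerSeries k)) : Matrix (Fin 2) (Fin 2) (PowerSeries k)) - lv i A) := by
  classical
  set W : Set (Matrix (Fin 2) (Fin 2) k) := {A | ∃ e ∈ H,
    ((e : GL (Fin 2) (PowerSeries k)) : Matrix (Fin 2) (Fin 2) (PowerSeries k)).det = 1 ∧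
    DvdE ((X : PowerSeries k) ^ (i + 1))
      (((e : GL (Fin 2) (PowerSeries k)) : Matrix (Fin 2) (Fin 2) (PowerSeries k)) - lv i A)}
    with hW
  have hsub : ∀ A ∈ W, ∀ B ∈ W, A - B ∈ W := by
    rintro A ⟨eA, heAH, heAdet, heA⟩ B ⟨eB, heBH, heBdet, heB⟩
    refine ⟨eA * eB⁻¹, mul_mem heAH (inv_mem heBH), ?_, ?_⟩
    · rw [Units.val_mul, det_mul, heAdet, det_inv_one heBdet, one_mul]
    · have hinv := lv_inv hi heB
      have := lv_mul hi heA hinv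
      rw [← Units.val_mul, ← sub_eq_add_neg] at this
      exact this
  have hconj : ∀ g g' : Matrix (Fin 2) (Fin 2) k, g * g' = 1 → ∀ A ∈ W, g * A * g' ∈ W := by
    rintro g g' hgg' A ⟨eA, heAH, heAdet, heA⟩
    have hg'g : g' * g = 1 := mul_eq_one_comm.mp hgg'
    set x : GL (Fin 2) k := glOf g g' hgg' hg'g with hx
    obtain ⟨hx0, hx0H, hx0red⟩ := hred x
    refine ⟨hx0 * eA * hx0⁻¹, mul_mem (mul_mem hx0H heAH) (inv_mem hx0H), ?_, ?_⟩
    · rw [Units.val_mul, Units.val_mul, det_mul, det_mul, heAdet, mul_one]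
      rw [← det_mul, Units.mul_inv, det_one]
    · have := lv_conj hx0red heA
      rw [Units.val_mul, Units.val_mul]
      have hxg : (x : Matrix (Fin 2) (Fin 2) k) = g := rfl
      have hxg' : ((x⁻¹ : GL (Fin 2) k) : Matrix (Fin 2) (Fin 2) k) = g' := rfl
      rwa [hxg, hxg'] at this
  have hNW : N ∈ W := hN
  have := L6 hk4 W hsub hconj N hNW hNns
  intro A hA
  exact this A hA

end MainLemmas

section Seed
variable {k : Type*} [Field k]

lemma seedW1 [Fintype k] (hk4 : 4 ≤ Fintype.card k)
    (H : Subgroup (GL (Fin 2) (PowerSeries k)))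
    (hred : ∀ m : GL (Fin 2) k, ∃ h ∈ H,
      Matrix.GeneralLinearGroup.map ((PowerSeries.constantCoeff (R := k))) h = m)
    (hns : ∃ h ∈ H,
      DvdE (X : PowerSeries k)
        (((h : GL (Fin 2) (PowerSeries k)) : Matrix (Fin 2) (Fin 2) (PowerSeries k)) - 1) ∧
      ¬ ∃ c : PowerSeries k, ∀ a b : Fin 2,
        (X : PowerSeries k) ^ 2 ∣
          (((h : GL (Fin 2) (PowerSeries k)) : Matrix (Fin 2) (Fin 2) (PowerSeries k)) a b -
            (Matrix.scalar (Fin 2) (1 + X * c)) a b)) :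
    ∃ N : Matrix (Fin 2) (Fin 2) k, ¬ (N 0 1 = 0 ∧ N 1 0 = 0 ∧ N 0 0 = N 1 1) ∧
      ∃ e ∈ H, ((e : GL (Fin 2) (PowerSeries k)) :
        Matrix (Fin 2) (Fin 2) (PowerSeries k)).det = 1 ∧
        DvdE ((X : PowerSeries k) ^ 2)
          (((e : GL (Fin 2) (PowerSeries k)) : Matrix (Fin 2) (Fin 2) (PowerSeries k)) - lv 1 N) := by
  classical
  obtain ⟨h, hH, h1, h2⟩ := hns
  set A₀ : Matrix (Fin 2) (Fin 2) k :=
    coefM 1 ((h : GL (Fin 2) (PowerSeries k)) : Matrix (Fin 2) (Fin 2) (PowerSeries k)) with hA₀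
  have h1' : DvdE ((X : PowerSeries k) ^ 1)
      (((h : GL (Fin 2) (PowerSeries k)) : Matrix (Fin 2) (Fin 2) (PowerSeries k)) - 1) := by
    rw [pow_one]; exact h1
  have happ : DvdE ((X : PowerSeries k) ^ 2)
      (((h : GL (Fin 2) (PowerSeries k)) : Matrix (Fin 2) (Fin 2) (PowerSeries k)) - lv 1 A₀) :=
    coefM_spec 1 _ h1'
  have hA₀ns : ¬ (A₀ 0 1 = 0 ∧ A₀ 1 0 = 0 ∧ A₀ 0 0 = A₀ 1 1) := by
    rintro ⟨e01, e10, ediag⟩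
    apply h2
    refine ⟨(PowerSeries.C (R := k)) (A₀ 0 0), ?_⟩
    intro a b
    have hsc : (Matrix.scalar (Fin 2) (1 + X * (PowerSeries.C (R := k)) (A₀ 0 0))
        : Matrix (Fin 2) (Fin 2) (PowerSeries k)) = lv 1 A₀ := by
      ext a' b'
      fin_cases a' <;> fin_cases b' <;>
        simp [Matrix.scalar_apply, Matrix.diagonal, lv, emb, e01, e10, ← ediag, pow_one]
    have heq : ((h : GL (Fin 2) (PowerSeries k)) :
          Matrix (Fin 2) (Fin 2) (PowerSeries k)) a b -
          (Matrix.scalar (Fin 2) (1 + X * (PowerSeries.C (R := k)) (A₀ 0 0))) a b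
        = (((h : GL (Fin 2) (PowerSeries k)) :
            Matrix (Fin 2) (Fin 2) (PowerSeries k)) - lv 1 A₀) a b := by
      rw [hsc, Matrix.sub_apply]
    rw [heq]
    exact happ a b
  -- the congruence set at level 1 (no determinant condition)
  set V : Set (Matrix (Fin 2) (Fin 2) k) := {A | ∃ h₀ ∈ H,
    DvdE ((X : PowerSeries k) ^ 2)
      (((h₀ : GL (Fin 2) (PowerSeries k)) : Matrix (Fin 2) (Fin 2) (PowerSeries k)) - lv 1 A)}
    with hV
  have hsub : ∀ A ∈ V, ∀ B ∈ V, A - B ∈ V := by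
    rintro A ⟨eA, heAH, heA⟩ B ⟨eB, heBH, heB⟩
    refine ⟨eA * eB⁻¹, mul_mem heAH (inv_mem heBH), ?_⟩
    have hinv := lv_inv (le_refl 1) heB
    have := lv_mul (le_refl 1) heA hinv
    rw [← Units.val_mul, ← sub_eq_add_neg] at this
    exact this
  have hconj : ∀ g g' : Matrix (Fin 2) (Fin 2) k, g * g' = 1 → ∀ A ∈ V, g * A * g' ∈ V := by
    rintro g g' hgg' A ⟨eA, heAH, heA⟩
    have hg'g : g' * g = 1 := mul_eq_one_comm.mp hgg'
    set x : GL (Fin 2) k := glOf g g' hgg' hg'g with hx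
    obtain ⟨hx0, hx0H, hx0red⟩ := hred x
    refine ⟨hx0 * eA * hx0⁻¹, mul_mem (mul_mem hx0H heAH) (inv_mem hx0H), ?_⟩
    have := lv_conj hx0red heA
    rw [Units.val_mul, Units.val_mul]
    have hxg : (x : Matrix (Fin 2) (Fin 2) k) = g := rfl
    have hxg' : ((x⁻¹ : GL (Fin 2) k) : Matrix (Fin 2) (Fin 2) k) = g' := rfl
    rwa [hxg, hxg'] at this
  have hA₀V : A₀ ∈ V := ⟨h, hH, happ⟩
  have hsl := L6 hk4 V hsub hconj A₀ hA₀V hA₀ns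
  have hE01V : (!![(0:k), 1; 0, 0] : Matrix (Fin 2) (Fin 2) k) ∈ V := by
    refine hsl _ ?_
    simp
  obtain ⟨hE, hEH, hEapp⟩ := hE01V
  obtain ⟨u, hu0, hu1⟩ := exists_ne_ne (by omega : 3 ≤ Fintype.card k) (0 : k) 1
  have hd1 : !![u, (0:k); 0, 1] * !![u⁻¹, 0; 0, 1] = 1 := by
    ext i j; fin_cases i <;> fin_cases j <;> simp [Matrix.mul_fin_two] <;> field_simp
  have hd2 : !![u⁻¹, (0:k); 0, 1] * !![u, 0; 0, 1] = 1 := by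
    ext i j; fin_cases i <;> fin_cases j <;> simp [Matrix.mul_fin_two] <;> field_simp
  set x : GL (Fin 2) k := glOf _ _ hd1 hd2 with hx
  obtain ⟨hx0, hx0H, hx0red⟩ := hred x
  refine ⟨!![(0:k), u - 1; 0, 0], ?_, hx0 * hE * hx0⁻¹ * hE⁻¹,
    mul_mem (mul_mem (mul_mem hx0H hEH) (inv_mem hx0H)) (inv_mem hEH),
    detcomm _ _, ?_⟩
  · rintro ⟨c1, -, -⟩
    simp at c1
    exact hu1 (by linear_combination c1)
  · have hconjE := lv_conj hx0red hEapp
    have hcomp : (x : Matrix (Fin 2) (Fin 2) k) * !![(0:k), 1; 0, 0] *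
        ((x⁻¹ : GL (Fin 2) k) : Matrix (Fin 2) (Fin 2) k) = !![(0:k), u; 0, 0] := by
      have hxg : (x : Matrix (Fin 2) (Fin 2) k) = !![u, (0:k); 0, 1] := rfl
      have hxg' : ((x⁻¹ : GL (Fin 2) k) : Matrix (Fin 2) (Fin 2) k) = !![u⁻¹, (0:k); 0, 1] := rfl
      rw [hxg, hxg']
      ext i j; fin_cases i <;> fin_cases j <;> simp [Matrix.mul_fin_two]
    rw [hcomp] at hconjE
    have hinvE := lv_inv (le_refl 1) hEapp
    have hmul := lv_mul (le_refl 1) hconjE hinvE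
    have hN : !![(0:k), u; 0, 0] + -(!![(0:k), 1; 0, 0]) = !![(0:k), u - 1; 0, 0] := by
      ext i j; fin_cases i <;> fin_cases j <;> simp <;> ring
    rw [hN] at hmul
    rw [Units.val_mul, Units.val_mul, Units.val_mul]
    exact hmul

end Seed

/-- (Pink–Rütsche)  Model the completion `A_𝔭 ≅ F_{q^n}[[X]]` of `A = F_q[T]` at a
maximal ideal `𝔭` of degree `n` as the power series ring over the residue field `k`
with `#k = q^n`.  Let `H` be a closed subgroup of `GL₂(k[[X]])` such that
(i) the reduction of `H` modulo `𝔭 = (X)` is all of `GL₂(k)`,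
(ii) `det H = k[[X]]ˣ`, and
(iii) the image of `H ∩ (Id + X·M₂)` modulo `Id + X²·M₂` contains a non-scalar
element.  If `q ≥ 4`, then `H = GL₂(k[[X]])`. -/
theorem stmt_16 (q n : ℕ) (hq : 4 ≤ q) (hn : 1 ≤ n)
    (k : Type*) [Field k] [Fintype k] (hk : Fintype.card k = q ^ n)
    (H : Subgroup (GL (Fin 2) (PowerSeries k)))
    (hclosed : ∀ g : GL (Fin 2) (PowerSeries k),
      (∀ i : ℕ, ∃ h ∈ H, ∀ a b : Fin 2,
        (X : PowerSeries k) ^ i ∣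
          ((g : Matrix (Fin 2) (Fin 2) (PowerSeries k)) a b -
            (h : Matrix (Fin 2) (Fin 2) (PowerSeries k)) a b)) → g ∈ H)
    (hred : ∀ m : GL (Fin 2) k, ∃ h ∈ H,
      Matrix.GeneralLinearGroup.map (constantCoeff : PowerSeries k →+* k) h = m)
    (hdet : ∀ u : (PowerSeries k)ˣ, ∃ h ∈ H,
      ((h : GL (Fin 2) (PowerSeries k)) : Matrix (Fin 2) (Fin 2) (PowerSeries k)).det
        = (u : PowerSeries k))
    (hnonscalar : ∃ h ∈ H,
      (∀ a b : Fin 2, (X : PowerSeries k) ∣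
        ((h : Matrix (Fin 2) (Fin 2) (PowerSeries k)) a b -
          (1 : Matrix (Fin 2) (Fin 2) (PowerSeries k)) a b)) ∧
      ¬ ∃ c : PowerSeries k, ∀ a b : Fin 2,
        (X : PowerSeries k) ^ 2 ∣
          ((h : Matrix (Fin 2) (Fin 2) (PowerSeries k)) a b -
            (Matrix.scalar (Fin 2) (1 + X * c)) a b)) :
    H = ⊤ := by
  classical
  have hk4 : 4 ≤ Fintype.card k := by
    rw [hk]; exact le_trans hq (Nat.le_self_pow (by omega) q)
  have hk3 : 3 ≤ Fintype.card k := by omega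
  -- determinant-one lifts of SL₂(k)
  have keyQ : ∀ m : Matrix (Fin 2) (Fin 2) k, m.det = 1 →
      ∃ e ∈ H, ((e : GL (Fin 2) (PowerSeries k)) :
          Matrix (Fin 2) (Fin 2) (PowerSeries k)).det = 1 ∧
        red ((e : GL (Fin 2) (PowerSeries k)) : Matrix (Fin 2) (Fin 2) (PowerSeries k)) = m := by
    intro m hm
    set S : Set (Matrix (Fin 2) (Fin 2) k) := {m' | ∃ e ∈ H,
      ((e : GL (Fin 2) (PowerSeries k)) :
          Matrix (Fin 2) (Fin 2) (PowerSeries k)).det = 1 ∧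
      red ((e : GL (Fin 2) (PowerSeries k)) :
          Matrix (Fin 2) (Fin 2) (PowerSeries k)) = m'} with hS
    refine sl2_mem_commutator_closure hk3 S ?_ ?_ m hm
    · rintro a ⟨ea, heaH, headet, heared⟩ b ⟨eb, hebH, hebdet, hebred⟩
      exact ⟨ea * eb, mul_mem heaH hebH,
        by rw [Units.val_mul, det_mul, headet, hebdet, one_mul],
        by rw [Units.val_mul, red_mul, heared, hebred]⟩
    · intro x y
      obtain ⟨hx, hxH, hxred⟩ := hred x
      obtain ⟨hy, hyH, hyred⟩ := hred y
      refine ⟨hx * hy * hx⁻¹ * hy⁻¹,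
        mul_mem (mul_mem (mul_mem hxH hyH) (inv_mem hxH)) (inv_mem hyH),
        detcomm _ _, ?_⟩
      rw [red_coe_map, _root_.map_mul, _root_.map_mul, _root_.map_mul, _root_.map_inv, _root_.map_inv, hxred, hyred]
  -- the main approximation statement
  have main : ∀ (i : ℕ) (g : GL (Fin 2) (PowerSeries k)), ∃ e ∈ H,
      ((e : GL (Fin 2) (PowerSeries k)) : Matrix (Fin 2) (Fin 2) (PowerSeries k)).det
        = ((g : GL (Fin 2) (PowerSeries k)) : Matrix (Fin 2) (Fin 2) (PowerSeries k)).det ∧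
      DvdE ((X : PowerSeries k) ^ i)
        (((g : GL (Fin 2) (PowerSeries k)) : Matrix (Fin 2) (Fin 2) (PowerSeries k)) -
         ((e : GL (Fin 2) (PowerSeries k)) : Matrix (Fin 2) (Fin 2) (PowerSeries k))) := by
    intro i
    induction i with
    | zero =>
      intro g
      obtain ⟨e, heH, hedet⟩ := hdet (Matrix.GeneralLinearGroup.det g)
      refine ⟨e, heH, ?_, ?_⟩
      · rw [hedet, Matrix.GeneralLinearGroup.val_det_apply]
      · intro a b; simpa using one_dvd _
    | succ i ih =>
      rcases Nat.eq_zero_or_pos i with rfl | hi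
      · -- level one : match the reduction, with exact determinant
        intro g
        set x := Matrix.GeneralLinearGroup.map ((constantCoeff (R := k))) g with hxdef
        obtain ⟨h₁, h₁H, h₁red⟩ := hred x
        set dg := Matrix.GeneralLinearGroup.det g with hdgdef
        set dh := Matrix.GeneralLinearGroup.det h₁ with hdhdef
        have hdg : (dg : PowerSeries k)
            = ((g : GL (Fin 2) (PowerSeries k)) :
                Matrix (Fin 2) (Fin 2) (PowerSeries k)).det :=
          Matrix.GeneralLinearGroup.val_det_apply g
        have hdh : (dh : PowerSeries k)
            = ((h₁ : GL (Fin 2) (PowerSeries k)) :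
                Matrix (Fin 2) (Fin 2) (PowerSeries k)).det :=
          Matrix.GeneralLinearGroup.val_det_apply h₁
        obtain ⟨h₂, h₂H, h₂det⟩ := hdet (dg * dh⁻¹)
        have hredgh : red ((g : GL (Fin 2) (PowerSeries k)) :
              Matrix (Fin 2) (Fin 2) (PowerSeries k))
            = red ((h₁ : GL (Fin 2) (PowerSeries k)) :
              Matrix (Fin 2) (Fin 2) (PowerSeries k)) := by
          rw [red_coe_map, red_coe_map, h₁red, hxdef]
        have hccdg : (constantCoeff (R := k)) (dg : PowerSeries k)
            = (constantCoeff (R := k)) (dh : PowerSeries k) := by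
          rw [hdg, hdh, ← det_red, ← det_red]
          exact congrArg Matrix.det hredgh
        have hccinv : (constantCoeff (R := k)) ((dh : PowerSeries k)) *
            (constantCoeff (R := k)) (((dh⁻¹ : (PowerSeries k)ˣ) : PowerSeries k)) = 1 := by
          rw [← _root_.map_mul, Units.mul_inv]
          simp
        have hreddet : (red ((h₂ : GL (Fin 2) (PowerSeries k)) :
            Matrix (Fin 2) (Fin 2) (PowerSeries k))).det = 1 := by
          rw [det_red, h₂det, Units.val_mul, _root_.map_mul, hccdg]
          exact hccinv
        obtain ⟨e, heH, hedet, hered⟩ := keyQ _ hreddet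
        refine ⟨e⁻¹ * h₂ * h₁, mul_mem (mul_mem (inv_mem heH) h₂H) h₁H, ?_, ?_⟩
        · rw [Units.val_mul, Units.val_mul, det_mul, det_mul, det_inv_one hedet, one_mul,
            h₂det, Units.val_mul]
          -- ↑dg * ↑dh⁻¹ * det ↑h₁ = det ↑g
          rw [← hdh, ← hdg]
          have : ((dh⁻¹ : (PowerSeries k)ˣ) : PowerSeries k) * (dh : PowerSeries k) = 1 := by
            rw [← Units.val_mul, inv_mul_cancel, Units.val_one]
          calc (dg : PowerSeries k) * ↑dh⁻¹ * ↑dh = ↑dg * (↑dh⁻¹ * ↑dh) := by ring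
            _ = ↑dg := by rw [this, mul_one]
        · rw [pow_one]
          rw [dvdE_X_iff_red, red_sub]
          have hredh₀ : red ((((e⁻¹ * h₂ * h₁ : GL (Fin 2) (PowerSeries k))) :
              Matrix (Fin 2) (Fin 2) (PowerSeries k)))
              = red ((h₁ : GL (Fin 2) (PowerSeries k)) :
                Matrix (Fin 2) (Fin 2) (PowerSeries k)) := by
            rw [Units.val_mul, Units.val_mul, red_mul, red_mul]
            have h1 : red (((e⁻¹ : GL (Fin 2) (PowerSeries k))) :
                Matrix (Fin 2) (Fin 2) (PowerSeries k)) *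
                red ((e : GL (Fin 2) (PowerSeries k)) :
                Matrix (Fin 2) (Fin 2) (PowerSeries k)) = 1 := by
              rw [← red_mul, Units.inv_mul, red_one]
            rw [hered] at h1
            rw [h1, one_mul]
          rw [hredh₀, hredgh, sub_self]
      · -- level i+1 for i ≥ 1
        have Vfull : ∀ j : ℕ, 1 ≤ j → j + 1 ≤ i → ∀ A : Matrix (Fin 2) (Fin 2) k,
            ∃ h₀ ∈ H, DvdE ((X : PowerSeries k) ^ (j + 1))
              (((h₀ : GL (Fin 2) (PowerSeries k)) :
                Matrix (Fin 2) (Fin 2) (PowerSeries k)) - lv j A) := by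
          intro j hj hji A
          have hunit := isUnit_lv j hj A
          obtain ⟨h₀, h₀H, -, h₀app⟩ := ih hunit.unit
          refine ⟨h₀, h₀H, ?_⟩
          have hus : ((hunit.unit : GL (Fin 2) (PowerSeries k)) :
              Matrix (Fin 2) (Fin 2) (PowerSeries k)) = lv j A := hunit.unit_spec
          rw [hus] at h₀app
          have h2 := (DvdE.mono (pow_dvd_pow _ hji) h₀app).neg
          rwa [neg_sub] at h2
        have hNS : ∃ N : Matrix (Fin 2) (Fin 2) k,
            ¬ (N 0 1 = 0 ∧ N 1 0 = 0 ∧ N 0 0 = N 1 1) ∧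
            ∃ e ∈ H, ((e : GL (Fin 2) (PowerSeries k)) :
                Matrix (Fin 2) (Fin 2) (PowerSeries k)).det = 1 ∧
              DvdE ((X : PowerSeries k) ^ (i + 1))
                (((e : GL (Fin 2) (PowerSeries k)) :
                  Matrix (Fin 2) (Fin 2) (PowerSeries k)) - lv i N) := by
          rcases Nat.lt_or_ge i 2 with hlt | hge
          · have hi1 : i = 1 := by omega
            subst hi1
            obtain ⟨h, hH, h1, h2⟩ := hnonscalar
            exact seedW1 hk4 H hred ⟨h, hH,
              fun a b => by rw [Matrix.sub_apply]; exact h1 a b, h2⟩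
          · obtain ⟨ha, haH, haapp⟩ := Vfull 1 le_rfl (by omega) !![(1:k), 0; 0, 0]
            obtain ⟨hb, hbH, hbapp⟩ := Vfull (i - 1) (by omega) (by omega) !![(0:k), 1; 0, 0]
            have hbr := lv_bracket (i := i - 1) (j := 1) (by omega) le_rfl haapp hbapp
            have harith : 1 + (i - 1) = i := by omega
            rw [harith] at hbr
            have hcommute : !![(1:k), 0; 0, 0] * !![(0:k), 1; 0, 0]
                - !![(0:k), 1; 0, 0] * !![(1:k), 0; 0, 0] = !![(0:k), 1; 0, 0] := by
              ext a b; fin_cases a <;> fin_cases b <;> simp [Matrix.mul_fin_two]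
            rw [hcommute] at hbr
            refine ⟨!![(0:k), 1; 0, 0], ?_,
              ha * hb * ha⁻¹ * hb⁻¹,
              mul_mem (mul_mem (mul_mem haH hbH) (inv_mem haH)) (inv_mem hbH),
              detcomm _ _, hbr⟩
            rintro ⟨c1, -, -⟩
            simp at c1
        obtain ⟨N, hNns, hNmem⟩ := hNS
        have hW := Wfull hk4 H hred i hi N hNns hNmem
        intro g
        obtain ⟨h₁, h₁H, h₁det, h₁app⟩ := ih g
        set c : GL (Fin 2) (PowerSeries k) := g * h₁⁻¹ with hc
        have hcdet : ((c : GL (Fin 2) (PowerSeries k)) :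
            Matrix (Fin 2) (Fin 2) (PowerSeries k)).det = 1 := by
          rw [hc, Units.val_mul, det_mul, ← h₁det, ← det_mul, Units.mul_inv, det_one]
        have hc1 : DvdE ((X : PowerSeries k) ^ i)
            (((c : GL (Fin 2) (PowerSeries k)) :
              Matrix (Fin 2) (Fin 2) (PowerSeries k)) - 1) := by
          have e : ((c : GL (Fin 2) (PowerSeries k)) :
                Matrix (Fin 2) (Fin 2) (PowerSeries k)) - 1
              = (((g : GL (Fin 2) (PowerSeries k)) :
                  Matrix (Fin 2) (Fin 2) (PowerSeries k)) -
                 ((h₁ : GL (Fin 2) (PowerSeries k)) :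
                  Matrix (Fin 2) (Fin 2) (PowerSeries k))) *
                (((h₁⁻¹ : GL (Fin 2) (PowerSeries k))) :
                  Matrix (Fin 2) (Fin 2) (PowerSeries k)) := by
            rw [hc, Units.val_mul, sub_mul]
            rw [show ((h₁ : GL (Fin 2) (PowerSeries k)) :
                Matrix (Fin 2) (Fin 2) (PowerSeries k)) *
                (((h₁⁻¹ : GL (Fin 2) (PowerSeries k))) :
                  Matrix (Fin 2) (Fin 2) (PowerSeries k)) = 1 from h₁.mul_inv]
          rw [e]
          exact h₁app.mul_right _
        have hcapp := coefM_spec i _ hc1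
        have htr := coefM_trace i hi _ hc1 hcdet
        obtain ⟨e, heH, hedet, heapp⟩ := hW _ htr
        refine ⟨e * h₁, mul_mem heH h₁H, ?_, ?_⟩
        · rw [Units.val_mul, det_mul, hedet, one_mul, h₁det]
        · have hch : ((c : GL (Fin 2) (PowerSeries k)) :
              Matrix (Fin 2) (Fin 2) (PowerSeries k)) *
              ((h₁ : GL (Fin 2) (PowerSeries k)) :
                Matrix (Fin 2) (Fin 2) (PowerSeries k))
              = ((g : GL (Fin 2) (PowerSeries k)) :
                Matrix (Fin 2) (Fin 2) (PowerSeries k)) := by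
            rw [hc, ← Units.val_mul, inv_mul_cancel_right]
          have e1 : ((g : GL (Fin 2) (PowerSeries k)) :
                Matrix (Fin 2) (Fin 2) (PowerSeries k)) -
              (((e * h₁ : GL (Fin 2) (PowerSeries k))) :
                Matrix (Fin 2) (Fin 2) (PowerSeries k))
              = ((((c : GL (Fin 2) (PowerSeries k)) :
                    Matrix (Fin 2) (Fin 2) (PowerSeries k)) -
                  lv i (coefM i ((c : GL (Fin 2) (PowerSeries k)) :
                    Matrix (Fin 2) (Fin 2) (PowerSeries k)))) -
                 (((e : GL (Fin 2) (PowerSeries k)) :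
                    Matrix (Fin 2) (Fin 2) (PowerSeries k)) -
                  lv i (coefM i ((c : GL (Fin 2) (PowerSeries k)) :
                    Matrix (Fin 2) (Fin 2) (PowerSeries k))))) *
                ((h₁ : GL (Fin 2) (PowerSeries k)) :
                  Matrix (Fin 2) (Fin 2) (PowerSeries k)) := by
            rw [Units.val_mul, ← hch]
            noncomm_ring
          rw [e1]
          exact (hcapp.sub heapp).mul_right _
  rw [eq_top_iff]
  intro g _
  apply hclosed g
  intro i
  obtain ⟨e, heH, -, happ⟩ := main i g
  exact ⟨e, heH, fun a b => by
    have := happ a b; rwa [Matrix.sub_apply] at this⟩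
end
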